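/- Let p be a prime with p ≡ 1 (mod q), and let n > q with α_p(n) ≤ q. Let p^m be the largest power of p appearing in the minimal representation of n as a sum of powers of p (so m ≥ 1). Then the p-adic valuation of C(n, (p-1)p^{m-1}) equals exactly 1, and q divides (p-1)p^{m-1}. -/

import Mathlib

private lemma sumdig_lt {b x : ℕ} (hb : 1 < b) (hx : x < b) :
    (Nat.digits b x).sum = x := by
  rcases Nat.eq_zero_or_pos x with rfl | h
  · simp
  · rw [Nat.digits_def' hb h, Nat.mod_eq_of_lt hx, Nat.div_eq_of_lt hx]
    simp

private lemma sumdig_split {b : ℕ} (hb : 1 < b) (x c e : ℕ) (hx : x < b ^ e) :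
    (Nat.digits b (x + b ^ e * c)).sum = (Nat.digits b x).sum + (Nat.digits b c).sum := by
  rcases Nat.eq_zero_or_pos c with rfl | hc
  · simp
  · have hlen : (Nat.digits b x).length ≤ e := by
      rcases Nat.eq_zero_or_pos x with rfl | hx0
      · simp
      · by_contra h
        push_neg at h
        have h1 : b ^ (Nat.digits b x).length ≤ b * x :=
          Nat.base_pow_length_digits_le b x hb (by omega)
        have hbx : b * x < b * b ^ e :=
          (Nat.mul_lt_mul_left (show 0 < b by omega)).mpr hx
        have h2 : b ^ (Nat.digits b x).length < b ^ (e + 1) := by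
          rw [pow_succ, mul_comm]
          exact lt_of_le_of_lt h1 hbx
        have h3 := (Nat.pow_lt_pow_iff_right hb).mp h2
        omega
    have hk : e = (Nat.digits b x).length + (e - (Nat.digits b x).length) := by omega
    rw [hk, ← Nat.digits_append_zeroes_append_digits hb hc]
    simp [List.sum_append]

theorem stmt_13 (n q p m : ℕ) (hq : 0 < q) (hn : q < n) (hp : p.Prime)
    (hcong : p % q = 1 % q) (hα : (Nat.digits p n).sum ≤ q)
    (hm : m = (Nat.digits p n).length - 1) (hm1 : 1 ≤ m) :
    padicValNat p (Nat.choose n ((p - 1) * p ^ (m - 1))) = 1 ∧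
    q ∣ (p - 1) * p ^ (m - 1) := by
  haveI : Fact p.Prime := ⟨hp⟩
  have hp1 : 1 < p := hp.one_lt
  have hqd : q ∣ p - 1 := (Nat.modEq_iff_dvd' (by omega)).mp hcong.symm
  have hqp : q ≤ p - 1 := Nat.le_of_dvd (by omega) hqd
  refine ⟨?_, hqd.mul_right _⟩
  have hL : (Nat.digits p n).length = m + 1 := by omega
  have hn0 : n ≠ 0 := by omega
  have hnlt : n < p ^ (m + 1) := by
    have := Nat.lt_base_pow_length_digits (m := n) hp1
    rwa [hL] at this
  have hpm_le : p ^ m ≤ n := by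
    have h1 : p ^ (m + 1) ≤ p * n := by
      have := Nat.base_pow_length_digits_le p n hp1 hn0
      rwa [hL] at this
    rw [pow_succ, mul_comm] at h1
    exact Nat.le_of_mul_le_mul_left h1 (by omega)
  have hpm1 : p ^ m = p ^ (m - 1) * p := by
    rw [← pow_succ]
    congr 1
    omega
  set a := n / p ^ m with ha_def
  set r := n % p ^ m with hr_def
  have hpmpos : 0 < p ^ m := Nat.pow_pos (by omega)
  have ha1 : 1 ≤ a := (Nat.one_le_div_iff hpmpos).mpr hpm_le
  have hap : a < p := by
    rw [ha_def, Nat.div_lt_iff_lt_mul hpmpos, mul_comm]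
    rw [pow_succ] at hnlt
    exact hnlt
  have hnar : n = r + p ^ m * a := by
    rw [ha_def, hr_def, Nat.mod_add_div]
  set t := r / p ^ (m - 1) with ht_def
  set s := r % p ^ (m - 1) with hs_def
  have hpm1pos : 0 < p ^ (m - 1) := Nat.pow_pos (by omega)
  have hrts : r = s + p ^ (m - 1) * t := by
    rw [ht_def, hs_def, Nat.mod_add_div]
  have hs : s < p ^ (m - 1) := Nat.mod_lt _ hpm1pos
  have hrlt : r < p ^ m := Nat.mod_lt _ hpmpos
  have ht : t < p := by
    rw [ht_def, Nat.div_lt_iff_lt_mul hpm1pos, mul_comm]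
    rw [hpm1] at hrlt
    exact hrlt
  -- digit sums
  have hsum_r : (Nat.digits p r).sum = (Nat.digits p s).sum + t := by
    rw [hrts, sumdig_split hp1 _ _ _ hs, sumdig_lt hp1 ht]
  have hsum_n : (Nat.digits p n).sum = (Nat.digits p s).sum + t + a := by
    rw [hnar, sumdig_split hp1 _ _ _ hrlt, sumdig_lt hp1 hap, hsum_r]
  have hta : t + a ≤ q := by omega
  have ht1 : t + 1 < p := by omega
  -- digit sum of k
  have hsum_k : (Nat.digits p ((p - 1) * p ^ (m - 1))).sum = p - 1 := by
    have : (p - 1) * p ^ (m - 1) = 0 + p ^ (m - 1) * (p - 1) := by ring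
    rw [this, sumdig_split hp1 _ _ _ hpm1pos, sumdig_lt (x := p - 1) hp1 (by omega)]
    simp
  -- key decomposition of n
  have key : n = (p - 1) * p ^ (m - 1) + (s + p ^ (m - 1) * ((t + 1) + p * (a - 1))) := by
    have h1 : n = s + p ^ (m - 1) * t + p ^ (m - 1) * (p * a) := by
      rw [hnar, hrts, hpm1]; ring
    obtain ⟨a', ha'⟩ : ∃ a', a = a' + 1 := ⟨a - 1, by omega⟩
    obtain ⟨p', hp'⟩ : ∃ p', p = p' + 1 := ⟨p - 1, by omega⟩
    rw [ha', hp'] at h1 ⊢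
    simp only [Nat.add_sub_cancel]
    rw [h1]; ring
  have hnk : n - (p - 1) * p ^ (m - 1) = s + p ^ (m - 1) * ((t + 1) + p * (a - 1)) := by
    rw [key, Nat.add_sub_cancel_left]
  have hkn : (p - 1) * p ^ (m - 1) ≤ n := by omega
  have hsum_nk : (Nat.digits p (n - (p - 1) * p ^ (m - 1))).sum
      = (Nat.digits p s).sum + (t + 1) + (a - 1) := by
    rw [hnk, sumdig_split hp1 _ _ _ hs]
    have h2 : (t + 1) + p * (a - 1) = (t + 1) + p ^ 1 * (a - 1) := by ring
    rw [h2, sumdig_split hp1 _ _ _ (by simpa using ht1), sumdig_lt hp1 ht1,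
      sumdig_lt (x := a - 1) hp1 (by omega)]
    ring
  have hval : (p - 1) * padicValNat p (Nat.choose n ((p - 1) * p ^ (m - 1))) = (p - 1) * 1 := by
    rw [sub_one_mul_padicValNat_choose_eq_sub_sum_digits hkn, hsum_k, hsum_nk, hsum_n]
    omega
  exact Nat.eq_of_mul_eq_mul_left (by omega) hval
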